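/- arXiv:2311.07522 — 2 statements merged into one kernel-verified Lean document; each statement's English description precedes it below -/
import Mathlib

section
/- Fix an integer p ≥ 1. For each k ∈ ℕ, let M_{2×p}^k(ℕ) denote the set of 2×p matrices with entries in ℕ whose entries sum to k, and let MM_{2×p}^k(ℕ) be the subset of those that additionally have the Monge property. Then the limit as k → ∞ of the ratio #MM_{2×p}^k(ℕ) / #M_{2×p}^k(ℕ) equals 1/p!. (This ratio limit is the normalized volume of the Monge polytope M_{2×p} inside the probability simplex of 2×p matrices.) -/
open Finset Filter

/-- The Monge property for a `2 × p` matrix with `ℕ` entries: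
`c_{1,j} + c_{2,J} ≤ c_{1,J} + c_{2,j}` whenever `j < J` (rows are 0-based here). -/
def IsMonge2 {p : ℕ} (C : Matrix (Fin 2) (Fin p) ℕ) : Prop :=
  ∀ j J : Fin p, j < J → C 0 j + C 1 J ≤ C 0 J + C 1 j

/-- `Mk2 p k`: the `2 × p` matrices over `ℕ` whose entries sum to `k`. -/
def Mk2 (p k : ℕ) : Set (Matrix (Fin 2) (Fin p) ℕ) :=
  {C | (∑ i, ∑ j, C i j) = k}

/-- `MMk2 p k`: the Monge matrices in `Mk2 p k`. -/
def MMk2 (p k : ℕ) : Set (Matrix (Fin 2) (Fin p) ℕ) :=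
  {C | C ∈ Mk2 p k ∧ IsMonge2 C}

/-! ### Auxiliary definitions -/

/-- The difference vector of a `2 × p` matrix. -/
def dvec {p : ℕ} (C : Matrix (Fin 2) (Fin p) ℕ) : Fin p → ℤ := fun j => (C 0 j : ℤ) - C 1 j

/-- Matrices in `Mk2` with pairwise distinct column differences. -/
def Md (p k : ℕ) : Set (Matrix (Fin 2) (Fin p) ℕ) :=
  {C | C ∈ Mk2 p k ∧ Function.Injective (dvec C)}

/-- Matrices in `Mk2` with a repeated column difference. -/
def Mt (p k : ℕ) : Set (Matrix (Fin 2) (Fin p) ℕ) :=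
  {C | C ∈ Mk2 p k ∧ ¬ Function.Injective (dvec C)}

/-- Monge matrices in `Mk2` with pairwise distinct column differences. -/
def MMd (p k : ℕ) : Set (Matrix (Fin 2) (Fin p) ℕ) :=
  {C | C ∈ MMk2 p k ∧ Function.Injective (dvec C)}

/-- Monge matrices in `Mk2` with a repeated column difference. -/
def MMt (p k : ℕ) : Set (Matrix (Fin 2) (Fin p) ℕ) :=
  {C | C ∈ MMk2 p k ∧ ¬ Function.Injective (dvec C)}

lemma monge_iff_monotone {p : ℕ} (C : Matrix (Fin 2) (Fin p) ℕ) :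
    IsMonge2 C ↔ Monotone (dvec C) := by
  rw [monotone_iff_forall_lt]
  constructor
  · intro h j J hjJ
    have := h j J hjJ
    simp only [dvec]
    omega
  · intro h j J hjJ
    have := h hjJ
    simp only [dvec] at this
    omega

lemma entry_le {p k : ℕ} {C : Matrix (Fin 2) (Fin p) ℕ} (h : C ∈ Mk2 p k) (i : Fin 2) (j : Fin p) :
    C i j ≤ k := by
  have h1 : C i j ≤ ∑ j, C i j := Finset.single_le_sum (fun _ _ => Nat.zero_le _) (mem_univ j)
  have h2 : (∑ j, C i j) ≤ ∑ i, ∑ j, C i j :=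
    Finset.single_le_sum (f := fun i => ∑ j, C i j) (fun _ _ => Nat.zero_le _) (mem_univ i)
  exact le_trans h1 (h2.trans_eq h)

lemma Mk2_finite (p k : ℕ) : (Mk2 p k).Finite := by
  have : Mk2 p k ⊆ Set.pi Set.univ (fun _ : Fin 2 => Set.pi Set.univ (fun _ : Fin p => Set.Iic k)) :=
    fun C hC i _ j _ => entry_le hC i j
  exact (Set.Finite.pi (fun _ => Set.Finite.pi (fun _ => Set.finite_Iic k))).subset this

lemma col_split {p k : ℕ} {C : Matrix (Fin 2) (Fin p) ℕ} (hC : C ∈ Mk2 p k) (J : Fin p) :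
    (∑ i, ∑ j ∈ univ.erase J, C i j) + (C 0 J + C 1 J) = k := by
  have h : ∀ i : Fin 2, ∑ j, C i j = (∑ j ∈ univ.erase J, C i j) + C i J := by
    intro i
    rw [← Finset.add_sum_erase univ _ (mem_univ J)]
    ring
  have := hC
  simp only [Mk2, Set.mem_setOf_eq] at this
  rw [Fin.sum_univ_two] at this ⊢
  rw [h 0, h 1] at this
  omega

/-- The bijection `Perm (Fin p) × MMd ≃ Md` given by permuting columns. -/
noncomputable def Fmap (p k : ℕ) (x : Equiv.Perm (Fin p) × (MMd p k)) : Md p k := by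
  refine ⟨fun i j => (x.2 : Matrix (Fin 2) (Fin p) ℕ) i (x.1 j), ?_, ?_⟩
  · have hs := x.2.2.1.1
    simp only [Mk2, Set.mem_setOf_eq] at hs ⊢
    exact (Finset.sum_congr rfl fun i _ =>
      (Equiv.sum_comp x.1 (fun j => (x.2 : Matrix _ _ ℕ) i j))).trans hs
  · have hinj := x.2.2.2
    exact fun a b hab => x.1.injective (hinj hab)

lemma Fmap_bij (p k : ℕ) : Function.Bijective (Fmap p k) := by
  constructor
  · rintro ⟨σ, M, hM, hMinj⟩ ⟨σ', M', hM', hM'inj⟩ h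
    have hCeq : (fun i j => M i (σ j)) = (fun i j => M' i (σ' j)) := congrArg Subtype.val h
    have hd : dvec M ∘ σ = dvec M' ∘ σ' := by
      funext j
      simp only [Function.comp, dvec]
      have : M 0 (σ j) = M' 0 (σ' j) := congrFun (congrFun hCeq 0) j
      have : M 1 (σ j) = M' 1 (σ' j) := congrFun (congrFun hCeq 1) j
      omega
    have hsm : StrictMono (dvec M) :=
      ((monge_iff_monotone M).1 hM.2).strictMono_of_injective hMinj
    have hsm' : StrictMono (dvec M') :=
      ((monge_iff_monotone M').1 hM'.2).strictMono_of_injective hM'inj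
    have hrange : Set.range (dvec M) = Set.range (dvec M') := by
      rw [← σ.surjective.range_comp (dvec M), ← σ'.surjective.range_comp (dvec M'), hd]
    haveI : WellFoundedLT (Fin p) := Finite.to_wellFoundedLT
    have hMM' : dvec M = dvec M' := (hsm.range_inj hsm').1 hrange
    have hσ : σ = σ' := by
      ext j
      have h1 : dvec M (σ j) = dvec M (σ' j) := by
        have := congrFun hd j
        simp only [Function.comp] at this
        rw [this, hMM']
      exact (hsm.injective h1) ▸ rfl
    have hMeq : M = M' := by
      funext i j
      have := congrFun (congrFun hCeq i) (σ.symm j)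
      simpa [hσ, Equiv.apply_symm_apply] using this
    simp [Prod.ext_iff, hσ, Subtype.ext_iff, hMeq]
  · rintro ⟨C, hC, hCinj⟩
    set τ := Tuple.sort (dvec C) with hτ
    refine ⟨⟨τ⁻¹, ⟨fun i j => C i (τ j), ⟨?_, ?_⟩, ?_⟩⟩, ?_⟩
    · simp only [Mk2, Set.mem_setOf_eq] at hC ⊢
      exact (Finset.sum_congr rfl fun i _ => (Equiv.sum_comp τ (fun j => C i j))).trans hC
    · refine (monge_iff_monotone _).2 ?_
      have : dvec (fun i j => C i (τ j)) = dvec C ∘ τ := rfl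
      rw [this]
      exact Tuple.monotone_sort (dvec C)
    · exact fun a b hab => τ.injective (hCinj hab)
    · apply Subtype.ext
      funext i j
      show C i (τ (τ⁻¹ j)) = C i j
      simp

lemma card_Md (p k : ℕ) : (Md p k).ncard = Nat.factorial p * (MMd p k).ncard := by
  have h := Nat.card_congr (Equiv.ofBijective _ (Fmap_bij p k))
  rw [Nat.card_prod] at h
  rw [← Nat.card_coe_set_eq, ← h, ← Nat.card_coe_set_eq]
  congr 1
  rw [Nat.card_eq_fintype_card, Fintype.card_perm, Fintype.card_fin]

lemma tie_bound (p k : ℕ) (hp : 1 ≤ p) :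
    (Mt p k).ncard ≤ p ^ 2 * (k + 1) ^ (2 * p - 2) := by
  classical
  set T := ((jJ : Fin p × Fin p) × (Fin 2 → {x : Fin p // x ≠ jJ.2} → Fin (k+1))) with hT
  have hcard : Fintype.card T = p ^ 2 * (k + 1) ^ ((p - 1) * 2) := by
    rw [Fintype.card_sigma]
    have : ∀ jJ : Fin p × Fin p,
        Fintype.card (Fin 2 → {x : Fin p // x ≠ jJ.2} → Fin (k+1)) = (k + 1) ^ ((p-1)*2) := by
      intro jJ
      rw [Fintype.card_fun, Fintype.card_fun]
      have : Fintype.card {x : Fin p // x ≠ jJ.2} = p - 1 := by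
        rw [Fintype.card_subtype_compl, Fintype.card_subtype_eq, Fintype.card_fin]
      rw [this, Fintype.card_fin, Fintype.card_fin, ← pow_mul]
    rw [Finset.sum_congr rfl (fun jJ _ => this jJ)]
    simp [Finset.card_univ, sq]
  have key : (Mt p k).ncard ≤ Fintype.card T := by
    set f : Matrix (Fin 2) (Fin p) ℕ → T := fun C =>
      if h : ∃ jJ : Fin p × Fin p, jJ.1 ≠ jJ.2 ∧ dvec C jJ.1 = dvec C jJ.2 then
        ⟨h.choose, fun i x => ⟨min (C i x.1) k, Nat.lt_succ_of_le (min_le_right _ _)⟩⟩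
      else ⟨(⟨0, hp⟩, ⟨0, hp⟩), fun _ _ => ⟨0, Nat.succ_pos k⟩⟩ with hf
    have hinj : Set.InjOn f (Mt p k) := by
      rintro C ⟨hC, hCt⟩ C' ⟨hC', hC't⟩ hEq
      have hex : ∃ jJ : Fin p × Fin p, jJ.1 ≠ jJ.2 ∧ dvec C jJ.1 = dvec C jJ.2 := by
        simp only [Function.Injective, not_forall] at hCt
        obtain ⟨a, b, hab, hne⟩ := hCt
        exact ⟨(a, b), hne, hab⟩
      have hex' : ∃ jJ : Fin p × Fin p, jJ.1 ≠ jJ.2 ∧ dvec C' jJ.1 = dvec C' jJ.2 := by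
        simp only [Function.Injective, not_forall] at hC't
        obtain ⟨a, b, hab, hne⟩ := hC't
        exact ⟨(a, b), hne, hab⟩
      rw [hf] at hEq
      simp only [dif_pos hex, dif_pos hex'] at hEq
      obtain ⟨h1, h2⟩ := Sigma.mk.inj_iff.1 hEq
      rw [← h1] at h2
      have h2' := eq_of_heq h2
      obtain ⟨hne, htie⟩ := hex.choose_spec
      obtain ⟨hne', htie'⟩ := hex'.choose_spec
      rw [← h1] at htie' hne'
      set jJ := hex.choose with hjJ
      have hcols : ∀ (i : Fin 2) (x : Fin p), x ≠ jJ.2 → C i x = C' i x := by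
        intro i x hx
        have := congrFun (congrFun h2' i) ⟨x, hx⟩
        have hmin : min (C i x) k = min (C' i x) k := congrArg Fin.val this
        have := entry_le hC i x
        have := entry_le hC' i x
        omega
      have hsums : ∀ i : Fin 2, ∑ j ∈ univ.erase jJ.2, C i j = ∑ j ∈ univ.erase jJ.2, C' i j := by
        intro i
        exact Finset.sum_congr rfl fun x hx => hcols i x (Finset.ne_of_mem_erase hx)
      have hcol := col_split hC jJ.2
      have hcol' := col_split hC' jJ.2
      rw [Fin.sum_univ_two, hsums 0, hsums 1,
        ← Fin.sum_univ_two (f := fun i => ∑ j ∈ univ.erase jJ.2, C' i j)] at hcol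
      have hsum : C 0 jJ.2 + C 1 jJ.2 = C' 0 jJ.2 + C' 1 jJ.2 := by omega
      have hdiff : (C 0 jJ.2 : ℤ) - C 1 jJ.2 = (C' 0 jJ.2 : ℤ) - C' 1 jJ.2 := by
        have e1 : (C 0 jJ.1 : ℤ) - C 1 jJ.1 = (C 0 jJ.2 : ℤ) - C 1 jJ.2 := htie
        have e2 : (C' 0 jJ.1 : ℤ) - C' 1 jJ.1 = (C' 0 jJ.2 : ℤ) - C' 1 jJ.2 := htie'
        have e3 : C 0 jJ.1 = C' 0 jJ.1 := hcols 0 jJ.1 hne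
        have e4 : C 1 jJ.1 = C' 1 jJ.1 := hcols 1 jJ.1 hne
        omega
      have e0 : C 0 jJ.2 = C' 0 jJ.2 := by omega
      have e1 : C 1 jJ.2 = C' 1 jJ.2 := by omega
      funext i x
      by_cases hx : x = jJ.2
      · subst hx
        fin_cases i
        · exact e0
        · exact e1
      · exact hcols i x hx
    have := Set.ncard_le_ncard_of_injOn f (fun C _ => Set.mem_univ (f C)) hinj (Set.finite_univ)
    rwa [Set.ncard_univ, Nat.card_eq_fintype_card] at this
  have hexp : (p - 1) * 2 = 2 * p - 2 := by omega
  rw [hexp] at hcard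
  omega

lemma lower_bound (p k : ℕ) (hp : 1 ≤ p) :
    (k / (2 * p - 1) + 1) ^ (2 * p - 1) ≤ (Mk2 p k).ncard := by
  classical
  set m := k / (2 * p - 1) with hm
  set last : Fin p := ⟨p - 1, by omega⟩ with hlast
  set D := ((Fin 2 → {x : Fin p // x ≠ last} → Fin (m+1)) × Fin (m+1)) with hD
  set S : (Fin 2 → {x : Fin p // x ≠ last} → Fin (m+1)) → ℕ :=
    fun g => ∑ i : Fin 2, ∑ x : {x : Fin p // x ≠ last}, (g i x : ℕ) with hS
  have hmk : (2 * p - 1) * m ≤ k := by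
    calc (2 * p - 1) * m = (k / (2 * p - 1)) * (2 * p - 1) := by rw [hm]; ring
      _ ≤ k := Nat.div_mul_le_self k _
  have hSk : ∀ g, S g + m ≤ k := by
    intro g
    have hone : ∀ i : Fin 2, ∑ x : {x : Fin p // x ≠ last}, (g i x : ℕ) ≤ (p - 1) * m := by
      intro i
      calc ∑ x : {x : Fin p // x ≠ last}, (g i x : ℕ)
          ≤ ∑ _x : {x : Fin p // x ≠ last}, m :=
            Finset.sum_le_sum (fun x _ => by have := (g i x).2; omega)
        _ = Fintype.card {x : Fin p // x ≠ last} * m := by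
            rw [Finset.sum_const, smul_eq_mul, Finset.card_univ]
        _ = (p - 1) * m := by
            rw [Fintype.card_subtype_compl, Fintype.card_subtype_eq, Fintype.card_fin]
    calc S g + m ≤ ((p-1)*m + (p-1)*m) + m := by
          have : S g = (∑ x : {x : Fin p // x ≠ last}, (g 0 x : ℕ))
              + ∑ x : {x : Fin p // x ≠ last}, (g 1 x : ℕ) := by
            simp only [hS, Fin.sum_univ_two]
          rw [this]
          exact add_le_add (add_le_add (hone 0) (hone 1)) le_rfl
      _ = ((p-1)+(p-1)+1)*m := by ring
      _ = (2*p-1)*m := by congr 1; omega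
      _ ≤ k := hmk
  set G : D → Matrix (Fin 2) (Fin p) ℕ := fun gd i j =>
    if h : j = last then (if i = 0 then (gd.2 : ℕ) else k - S gd.1 - gd.2) else gd.1 i ⟨j, h⟩
    with hG
  have hGoff : ∀ (gd : D) (i : Fin 2) (x : {x : Fin p // x ≠ last}),
      G gd i x.1 = gd.1 i x := by
    intro gd i x
    simp only [hG]
    rw [dif_neg x.2]
  have hmem : ∀ gd : D, G gd ∈ Mk2 p k := by
    intro ⟨g, a⟩
    simp only [Mk2, Set.mem_setOf_eq]
    have hrow : ∀ i : Fin 2, ∑ j, G (g, a) i j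
        = (∑ x : {x : Fin p // x ≠ last}, (g i x : ℕ)) + G (g, a) i last := by
      intro i
      rw [← Finset.add_sum_erase univ _ (mem_univ last), add_comm]
      congr 1
      have e1 : ∑ j ∈ univ.erase last, G (g,a) i j
          = ∑ x : {x : Fin p // x ≠ last}, G (g,a) i x.1 := by
        rw [Finset.sum_subtype (p := fun x => x ≠ last) (univ.erase last)
          (fun x => by simp [Finset.mem_erase]) (fun j => G (g,a) i j)]
      rw [e1]
      exact Finset.sum_congr rfl (fun x _ => hGoff (g,a) i x)
    rw [Fin.sum_univ_two, hrow 0, hrow 1]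
    have hS0 : S g = (∑ x : {x : Fin p // x ≠ last}, (g 0 x : ℕ))
        + ∑ x : {x : Fin p // x ≠ last}, (g 1 x : ℕ) := by
      simp only [hS, Fin.sum_univ_two]
    have hga : G (g, a) 0 last = (a : ℕ) := by simp [hG]
    have hgb : G (g, a) 1 last = k - S g - a := by simp [hG]
    have hSk' := hSk g
    have ha := a.2
    rw [hga, hgb]
    omega
  have hinj : Function.Injective G := by
    rintro ⟨g, a⟩ ⟨g', a'⟩ hEq
    have hval : ∀ i j, G (g,a) i j = G (g',a') i j := fun i j => congrFun (congrFun hEq i) j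
    have hg : g = g' := by
      funext i x
      have h1 := hGoff (g,a) i x
      have h2 := hGoff (g',a') i x
      have := hval i x.1
      rw [h1, h2] at this
      exact Fin.ext this
    have ha : a = a' := by
      have := hval 0 last
      simp only [hG, dif_pos rfl, if_pos rfl] at this
      exact Fin.ext this
    rw [Prod.ext_iff]; exact ⟨hg, ha⟩
  have hle := Set.ncard_le_ncard_of_injOn (s := (Set.univ : Set D)) G
    (fun gd _ => hmem gd) (hinj.injOn) (Mk2_finite p k)
  have hcardD : (Set.univ : Set D).ncard = (m+1) ^ (2*p-1) := by
    rw [Set.ncard_univ, Nat.card_eq_fintype_card]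
    rw [Fintype.card_prod, Fintype.card_fun, Fintype.card_fun, Fintype.card_fin, Fintype.card_fin]
    have : Fintype.card {x : Fin p // x ≠ last} = p - 1 := by
      rw [Fintype.card_subtype_compl, Fintype.card_subtype_eq, Fintype.card_fin]
    rw [this, ← pow_mul, ← pow_succ]
    congr 1
    omega
  rw [hcardD] at hle
  exact hle

lemma card_split1 (p k : ℕ) : (Mk2 p k).ncard = (Md p k).ncard + (Mt p k).ncard := by
  classical
  have hU : Mk2 p k = Md p k ∪ Mt p k := by
    ext C
    simp only [Md, Mt, Set.mem_union, Set.mem_setOf_eq]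
    tauto
  have hdisj : Disjoint (Md p k) (Mt p k) := by
    rw [Set.disjoint_left]
    rintro C ⟨_, hI⟩ ⟨_, hnI⟩
    exact hnI hI
  rw [hU, Set.ncard_union_eq hdisj ((Mk2_finite p k).subset (fun C hC => hC.1))
    ((Mk2_finite p k).subset (fun C hC => hC.1))]

lemma card_split2 (p k : ℕ) : (MMk2 p k).ncard = (MMd p k).ncard + (MMt p k).ncard := by
  classical
  have hU : MMk2 p k = MMd p k ∪ MMt p k := by
    ext C
    simp only [MMd, MMt, Set.mem_union, Set.mem_setOf_eq]
    tauto
  have hdisj : Disjoint (MMd p k) (MMt p k) := by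
    rw [Set.disjoint_left]
    rintro C ⟨_, hI⟩ ⟨_, hnI⟩
    exact hnI hI
  rw [hU, Set.ncard_union_eq hdisj ((Mk2_finite p k).subset (fun C hC => hC.1.1))
    ((Mk2_finite p k).subset (fun C hC => hC.1.1))]

lemma MMt_le_Mt (p k : ℕ) : (MMt p k).ncard ≤ (Mt p k).ncard :=
  Set.ncard_le_ncard (fun C hC => ⟨hC.1.1, hC.2⟩)
    ((Mk2_finite p k).subset (fun C hC => hC.1))

lemma key_identity (p k : ℕ) :
    Nat.factorial p * (MMk2 p k).ncard + (Mt p k).ncard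
      = (Mk2 p k).ncard + Nat.factorial p * (MMt p k).ncard := by
  rw [card_split1, card_split2, card_Md]
  ring

/-- The normalized volume of the two-row Monge polytope:
`#MM_{2×p}^k(ℕ) / #M_{2×p}^k(ℕ) → 1 / p!` as `k → ∞`. -/
theorem two_row_monge_normalized_volume (p : ℕ) (hp : 1 ≤ p) :
    Tendsto (fun k : ℕ => ((MMk2 p k).ncard : ℝ) / ((Mk2 p k).ncard : ℝ))
      atTop (nhds (1 / (Nat.factorial p : ℝ))) := by
  have hfac : (0:ℝ) < Nat.factorial p := by positivity
  have hMcpos : ∀ k, (0:ℝ) < ((Mk2 p k).ncard : ℝ) := by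
    intro k
    have h1 : 1 ≤ (Mk2 p k).ncard := le_trans (Nat.one_le_pow _ _ (Nat.succ_pos _))
      (lower_bound p k hp)
    exact_mod_cast Nat.lt_of_lt_of_le Nat.zero_lt_one h1
  set A : ℕ → ℝ := fun k => ((Mt p k).ncard : ℝ) / ((Mk2 p k).ncard : ℝ) with hA
  -- A → 0
  have hA0 : Tendsto A atTop (nhds 0) := by
    set q := 2 * p - 1 with hq
    have hq1 : 1 ≤ q := by omega
    set Cst : ℝ := (p:ℝ)^2 * 2^(2*p-2) * (q:ℝ)^q with hCst
    have hB : ∀ k : ℕ, 1 ≤ k → A k ≤ Cst / k := by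
      intro k hk
      set t : ℝ := ((k / q + 1 : ℕ) : ℝ) with ht
      have htpos : (0:ℝ) < t := by positivity
      have hkr : (0:ℝ) < (k:ℝ) := by exact_mod_cast hk
      have hkr1 : (1:ℝ) ≤ (k:ℝ) := by exact_mod_cast hk
      have hkq : (k:ℝ) / q ≤ t := by
        rw [div_le_iff₀ (by exact_mod_cast hq1 : (0:ℝ) < (q:ℝ))]
        have hnat : k < q * (k / q + 1) := by
          calc k = q * (k / q) + k % q := (Nat.div_add_mod k q).symm
            _ < q * (k / q) + q := by
                have := Nat.mod_lt k (show 0 < q by omega)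
                omega
            _ = q * (k / q + 1) := by ring
        have hcast : (k:ℝ) < (q:ℝ) * (((k / q + 1 : ℕ)):ℝ) := by exact_mod_cast hnat
        rw [ht]
        linarith
      have step1 : A k ≤ ((p:ℝ)^2 * ((k:ℝ)+1)^(2*p-2)) / t^q := by
        apply div_le_div₀ (by positivity) ?_ (by positivity) ?_
        · have := tie_bound p k hp
          have : ((Mt p k).ncard : ℝ) ≤ ((p ^ 2 * (k + 1) ^ (2 * p - 2) : ℕ) : ℝ) := by
            exact_mod_cast this
          calc ((Mt p k).ncard : ℝ) ≤ ((p ^ 2 * (k + 1) ^ (2 * p - 2) : ℕ) : ℝ) := this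
            _ = (p:ℝ)^2 * ((k:ℝ)+1)^(2*p-2) := by push_cast; ring
        · have := lower_bound p k hp
          have h2 : (((k / (2*p-1) + 1) ^ (2 * p - 1) : ℕ) : ℝ) ≤ ((Mk2 p k).ncard : ℝ) := by
            exact_mod_cast this
          calc t^q = (((k / q + 1) ^ q : ℕ) : ℝ) := by rw [ht]; push_cast; ring
            _ ≤ ((Mk2 p k).ncard : ℝ) := by rw [hq]; exact_mod_cast lower_bound p k hp
      have step2 : ((p:ℝ)^2 * ((k:ℝ)+1)^(2*p-2)) / t^q ≤ Cst / k := by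
        rw [div_le_div_iff₀ (by positivity) hkr]
        have hnum : (p:ℝ)^2 * ((k:ℝ)+1)^(2*p-2) * k ≤ (p:ℝ)^2 * 2^(2*p-2) * (k:ℝ)^q := by
          have h1 : ((k:ℝ)+1)^(2*p-2) ≤ (2*(k:ℝ))^(2*p-2) := by
            apply pow_le_pow_left₀ (by positivity)
            linarith
          calc (p:ℝ)^2 * ((k:ℝ)+1)^(2*p-2) * k
              ≤ (p:ℝ)^2 * (2*(k:ℝ))^(2*p-2) * k := by gcongr <;> linarith
            _ = (p:ℝ)^2 * 2^(2*p-2) * ((k:ℝ)^(2*p-2) * k) := by rw [mul_pow]; ring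
            _ = (p:ℝ)^2 * 2^(2*p-2) * (k:ℝ)^q := by
                rw [← pow_succ]
                congr 2
                omega
        have hden : (p:ℝ)^2 * 2^(2*p-2) * (k:ℝ)^q ≤ Cst * t^q := by
          have hkq' : ((k:ℝ)/q)^q ≤ t^q := pow_le_pow_left₀ (by positivity) hkq q
          have hqr : (0:ℝ) < (q:ℝ) := by exact_mod_cast hq1
          have hkq'' : (k:ℝ)^q = (q:ℝ)^q * ((k:ℝ)/q)^q := by
            rw [div_pow]
            field_simp
          calc (p:ℝ)^2 * 2^(2*p-2) * (k:ℝ)^q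
              = (p:ℝ)^2 * 2^(2*p-2) * ((q:ℝ)^q * ((k:ℝ)/q)^q) := by rw [hkq'']
            _ ≤ (p:ℝ)^2 * 2^(2*p-2) * ((q:ℝ)^q * t^q) := by
                have : (0:ℝ) ≤ (p:ℝ)^2 * 2^(2*p-2) := by positivity
                have : (0:ℝ) ≤ (q:ℝ)^q := by positivity
                gcongr
            _ = Cst * t^q := by rw [hCst]; ring
        linarith
      exact step1.trans step2
    have hCk : Tendsto (fun k : ℕ => Cst / k) atTop (nhds 0) :=
      tendsto_const_div_atTop_nhds_zero_nat Cst
    apply squeeze_zero' (Filter.Eventually.of_forall ?_) ?_ hCk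
    · intro k
      exact div_nonneg (by positivity) (by positivity)
    · filter_upwards [Filter.eventually_ge_atTop 1] with k hk
      exact hB k hk
  -- squeeze the main ratio
  have hub : ∀ k, ((MMk2 p k).ncard : ℝ) / ((Mk2 p k).ncard : ℝ)
      ≤ 1 / (Nat.factorial p : ℝ) + A k := by
    intro k
    have hkey : (Nat.factorial p : ℝ) * ((MMk2 p k).ncard : ℝ)
        ≤ ((Mk2 p k).ncard : ℝ) + (Nat.factorial p : ℝ) * ((Mt p k).ncard : ℝ) := by
      have h1 := key_identity p k
      have h2 := MMt_le_Mt p k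
      have : Nat.factorial p * (MMk2 p k).ncard
          ≤ (Mk2 p k).ncard + Nat.factorial p * (Mt p k).ncard := by
        calc Nat.factorial p * (MMk2 p k).ncard
            ≤ Nat.factorial p * (MMk2 p k).ncard + (Mt p k).ncard := Nat.le_add_right _ _
          _ = (Mk2 p k).ncard + Nat.factorial p * (MMt p k).ncard := h1
          _ ≤ (Mk2 p k).ncard + Nat.factorial p * (Mt p k).ncard := by
              exact Nat.add_le_add_left (Nat.mul_le_mul_left _ h2) _
      exact_mod_cast this
    have hM := hMcpos k
    rw [hA]
    have e : 1 / (Nat.factorial p : ℝ) + ((Mt p k).ncard : ℝ) / ((Mk2 p k).ncard : ℝ)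
        = (((Mk2 p k).ncard : ℝ) + (Nat.factorial p : ℝ) * ((Mt p k).ncard : ℝ))
          / ((Nat.factorial p : ℝ) * ((Mk2 p k).ncard : ℝ)) := by
      field_simp
    rw [e, div_le_div_iff₀ hM (by positivity)]
    nlinarith [hkey, hM.le]
  have hlb : ∀ k, 1 / (Nat.factorial p : ℝ) - A k
      ≤ ((MMk2 p k).ncard : ℝ) / ((Mk2 p k).ncard : ℝ) := by
    intro k
    have hkey : ((Mk2 p k).ncard : ℝ)
        ≤ (Nat.factorial p : ℝ) * ((MMk2 p k).ncard : ℝ)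
          + (Nat.factorial p : ℝ) * ((Mt p k).ncard : ℝ) := by
      have h1 := key_identity p k
      have : (Mk2 p k).ncard ≤ Nat.factorial p * (MMk2 p k).ncard
          + Nat.factorial p * (Mt p k).ncard := by
        have h2 := MMt_le_Mt p k
        have hfac1 : 1 ≤ Nat.factorial p := Nat.one_le_iff_ne_zero.mpr (Nat.factorial_ne_zero p)
        have : (Mt p k).ncard ≤ Nat.factorial p * (Mt p k).ncard := Nat.le_mul_of_pos_left _ hfac1
        omega
      exact_mod_cast this
    have hM := hMcpos k
    rw [hA, sub_le_iff_le_add]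
    have e : ((MMk2 p k).ncard : ℝ) / ((Mk2 p k).ncard : ℝ)
        + ((Mt p k).ncard : ℝ) / ((Mk2 p k).ncard : ℝ)
        = (((MMk2 p k).ncard : ℝ) + ((Mt p k).ncard : ℝ)) / ((Mk2 p k).ncard : ℝ) := by
      rw [← add_div]
    rw [e, div_le_div_iff₀ (by positivity) hM]
    have hfac1' : 1 ≤ Nat.factorial p := Nat.one_le_iff_ne_zero.mpr (Nat.factorial_ne_zero p)
    have hfac1 : (1:ℝ) ≤ (Nat.factorial p : ℝ) := by exact_mod_cast hfac1'

    have hMt0 : (0:ℝ) ≤ ((Mt p k).ncard : ℝ) := by positivity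
    have hMM0 : (0:ℝ) ≤ ((MMk2 p k).ncard : ℝ) := by positivity
    calc 1 * ((Mk2 p k).ncard : ℝ) = ((Mk2 p k).ncard : ℝ) := one_mul _
      _ ≤ (Nat.factorial p : ℝ) * ((MMk2 p k).ncard : ℝ)
          + (Nat.factorial p : ℝ) * ((Mt p k).ncard : ℝ) := hkey
      _ = (((MMk2 p k).ncard : ℝ) + ((Mt p k).ncard : ℝ)) * (Nat.factorial p : ℝ) := by ring
  have hl : Tendsto (fun k => 1 / (Nat.factorial p : ℝ) - A k) atTop
      (nhds (1 / (Nat.factorial p : ℝ))) := by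
    have := (tendsto_const_nhds (x := 1 / (Nat.factorial p : ℝ)) (f := atTop (α := ℕ))).sub hA0
    simpa using this
  have hu : Tendsto (fun k => 1 / (Nat.factorial p : ℝ) + A k) atTop
      (nhds (1 / (Nat.factorial p : ℝ))) := by
    have := (tendsto_const_nhds (x := 1 / (Nat.factorial p : ℝ)) (f := atTop (α := ℕ))).add hA0
    simpa using this
  exact tendsto_of_tendsto_of_tendsto_of_le_of_le hl hu hlb hub
end

section
/- Let p_1, …, p_m be positive integers (m ≥ 1) and let D(t) = Π_{i=1}^m (1 − t^{p_i}). Let N(t) be a real polynomial with deg N < deg D and N(1) ≠ 0, and assume that every complex root β ≠ 1 of D has multiplicity strictly less than m (the multiplicity of the root 1). Define f_k to be the k-th coefficient of the formal power series expansion of N(t)/D(t). Then the limit as k → ∞ of f_k / k^{m−1} equals N(1) / ((m−1)! · Π_{i=1}^m p_i). -/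
open Finset Filter Polynomial

/-- Partial fraction decomposition at the polynomial level. -/
theorem my_partial_fractions {K : Type*} [Field K] {ι : Type*} [DecidableEq ι]
    (s : Finset ι) (g : ι → K[X]) (hmon : ∀ i ∈ s, (g i).Monic)
    (hcop : ∀ i ∈ s, ∀ j ∈ s, i ≠ j → IsCoprime (g i) (g j)) :
    ∀ f : K[X], f.degree < (∏ i ∈ s, g i).degree →
      ∃ r : ι → K[X], (∀ i ∈ s, (r i).degree < (g i).degree) ∧
        f = ∑ i ∈ s, r i * ∏ j ∈ s.erase i, g j := by
  induction s using Finset.induction_on with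
  | empty =>
    intro f hf
    refine ⟨0, by simp, ?_⟩
    simp only [Finset.prod_empty, Polynomial.degree_one] at hf
    rw [Nat.WithBot.lt_zero_iff] at hf
    simp [Polynomial.degree_eq_bot.mp hf]
  | @insert a s ha ih =>
    intro f hf
    have hma : (g a).Monic := hmon a (Finset.mem_insert_self a s)
    have hmonP : (∏ i ∈ s, g i).Monic :=
      Polynomial.monic_prod_of_monic _ _ fun i hi => hmon i (Finset.mem_insert_of_mem hi)
    have hPne : (∏ i ∈ s, g i) ≠ 0 := hmonP.ne_zero
    have hcopaP : IsCoprime (g a) (∏ i ∈ s, g i) := by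
      refine IsCoprime.prod_right fun i hi => ?_
      exact hcop a (Finset.mem_insert_self a s) i (Finset.mem_insert_of_mem hi)
        (fun h => ha (h ▸ hi))
    obtain ⟨u, v, huv⟩ := hcopaP
    set P := ∏ i ∈ s, g i with hP
    set ra := (f * v) %ₘ g a with hra
    set q := (f * v) /ₘ g a with hq
    have hfv : f * v = ra + g a * q := ((f * v).modByMonic_add_div (g a)).symm
    have hdra : ra.degree < (g a).degree := Polynomial.degree_modByMonic_lt _ hma
    have hprodins : ∏ i ∈ insert a s, g i = g a * P := Finset.prod_insert ha
    have hkey : f = ra * P + g a * (f * u + q * P) := by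
      have : f = f * (u * g a + v * P) := by rw [huv, mul_one]
      calc f = f * (u * g a + v * P) := this
        _ = (f * v) * P + g a * (f * u) := by ring
        _ = (ra + g a * q) * P + g a * (f * u) := by rw [← hfv]
        _ = ra * P + g a * (f * u + q * P) := by ring
    set h := f * u + q * P with hh
    have hdh : h.degree < P.degree := by
      have h1 : (g a * h).degree < (g a).degree + P.degree := by
        have : g a * h = f - ra * P := by rw [hkey]; ring
        rw [this]
        apply lt_of_le_of_lt (Polynomial.degree_sub_le _ _)
        rw [max_lt_iff]
        constructor
        · rw [← Polynomial.degree_mul, ← hprodins]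
          exact hf
        · rw [Polynomial.degree_mul]
          exact WithBot.add_lt_add_right (by simp [Polynomial.degree_eq_bot, hPne]) hdra
      rw [Polynomial.degree_mul] at h1
      rcases eq_or_ne h 0 with h0 | h0
      · rw [h0, Polynomial.degree_zero]
        exact lt_of_lt_of_le (by simp [WithBot.bot_lt_iff_ne_bot, Polynomial.degree_eq_bot, hPne] : (⊥ : WithBot ℕ) < P.degree) le_rfl
      · have := (WithBot.add_lt_add_iff_left (by simp [hma.ne_zero, Polynomial.degree_eq_bot] : (g a).degree ≠ ⊥)).mp h1
        exact this
    obtain ⟨r, hrdeg, hrsum⟩ := ih (fun i hi => hmon i (Finset.mem_insert_of_mem hi))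
      (fun i hi j hj hij => hcop i (Finset.mem_insert_of_mem hi) j (Finset.mem_insert_of_mem hj) hij)
      h hdh
    refine ⟨Function.update r a ra, ?_, ?_⟩
    · intro i hi
      rcases Finset.mem_insert.mp hi with rfl | hi
      · simpa using hdra
      · have hia : i ≠ a := fun h => ha (h ▸ hi)
        rw [Function.update_of_ne hia]
        exact hrdeg i hi
    · rw [Finset.sum_insert ha, Finset.erase_insert ha, Function.update_self]
      have : ∀ i ∈ s, Function.update r a ra i * ∏ j ∈ (insert a s).erase i, g j
          = g a * (r i * ∏ j ∈ s.erase i, g j) := by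
        intro i hi
        have hia : i ≠ a := fun h => ha (h ▸ hi)
        rw [Function.update_of_ne hia, Finset.erase_insert_of_ne hia.symm,
          Finset.prod_insert (fun h => ha (Finset.mem_of_mem_erase h))]
        ring
      rw [Finset.sum_congr rfl this, ← Finset.mul_sum, ← hrsum, hkey]

lemma my_mk_const_mul {R : Type*} [CommRing R] (a : R) (f : ℕ → R) :
    (PowerSeries.mk fun n => a * f n) = PowerSeries.C a * PowerSeries.mk f := by
  ext n
  simp [PowerSeries.coeff_mk, PowerSeries.coeff_C_mul]

lemma my_one_sub_mul_choose {S : Type*} [CommRing S] (d : ℕ) :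
    ((1 - PowerSeries.X : PowerSeries S) ^ (d + 1)) *
      (PowerSeries.mk fun n => (Nat.choose (d + n) d : S)) = 1 := by
  have h := (PowerSeries.invOneSubPow S (d + 1)).inv_val
  rwa [PowerSeries.invOneSubPow_inv_eq_one_sub_pow,
    PowerSeries.invOneSubPow_val_succ_eq_mk_add_choose] at h

lemma my_one_sub_smul_mul_choose {S : Type*} [CommRing S] (α : S) (d : ℕ) :
    ((1 - PowerSeries.C α * PowerSeries.X : PowerSeries S) ^ (d + 1)) *
      (PowerSeries.mk fun n => α ^ n * (Nat.choose (d + n) d : S)) = 1 := by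
  have h := congrArg (PowerSeries.rescale α) (my_one_sub_mul_choose (S := S) d)
  rwa [map_mul, map_pow, map_sub, map_one, PowerSeries.rescale_X, PowerSeries.rescale_mk] at h

lemma my_X_sub_C_pow_inv (β : ℂ) (hβ : β ≠ 0) (d : ℕ) :
    (((Polynomial.X - Polynomial.C β) ^ (d + 1) : ℂ[X]) : PowerSeries ℂ) *
      (PowerSeries.mk fun n =>
        ((-β) ^ (d + 1))⁻¹ * (β⁻¹) ^ n * (Nat.choose (d + n) d : ℂ)) = 1 := by
  have h1 : PowerSeries.C (-β) * PowerSeries.C β⁻¹ = -1 := by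
    rw [← map_mul, neg_mul, mul_inv_cancel₀ hβ, map_neg, map_one]
  have hfacPS : ((Polynomial.X - Polynomial.C β : ℂ[X]) : PowerSeries ℂ)
      = PowerSeries.C (-β) * (1 - PowerSeries.C β⁻¹ * PowerSeries.X) := by
    calc ((Polynomial.X - Polynomial.C β : ℂ[X]) : PowerSeries ℂ)
        = PowerSeries.X + PowerSeries.C (-β) := by
          rw [sub_eq_add_neg, ← Polynomial.C_neg, Polynomial.coe_add, Polynomial.coe_X,
            Polynomial.coe_C]
      _ = PowerSeries.C (-β) * (1 - PowerSeries.C β⁻¹ * PowerSeries.X) := by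
          rw [mul_sub, mul_one, ← mul_assoc, h1]; ring
  have hco : (((Polynomial.X - Polynomial.C β) ^ (d + 1) : ℂ[X]) : PowerSeries ℂ)
      = PowerSeries.C ((-β) ^ (d + 1)) *
        (1 - PowerSeries.C β⁻¹ * PowerSeries.X) ^ (d + 1) := by
    rw [Polynomial.coe_pow, hfacPS, mul_pow, map_pow]
  have hmk : (PowerSeries.mk fun n =>
        ((-β) ^ (d + 1))⁻¹ * (β⁻¹) ^ n * (Nat.choose (d + n) d : ℂ))
      = PowerSeries.C (((-β) ^ (d + 1))⁻¹) *
        PowerSeries.mk (fun n => (β⁻¹) ^ n * (Nat.choose (d + n) d : ℂ)) := by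
    rw [← my_mk_const_mul]
    simp [mul_assoc]
  rw [hco, hmk]
  have hne : (-β) ^ (d + 1) ≠ 0 := pow_ne_zero _ (neg_ne_zero.mpr hβ)
  calc PowerSeries.C ((-β) ^ (d + 1)) * (1 - PowerSeries.C β⁻¹ * PowerSeries.X) ^ (d + 1) *
        (PowerSeries.C (((-β) ^ (d + 1))⁻¹) *
          PowerSeries.mk (fun n => (β⁻¹) ^ n * (Nat.choose (d + n) d : ℂ)))
      = (PowerSeries.C ((-β) ^ (d + 1)) * PowerSeries.C (((-β) ^ (d + 1))⁻¹)) *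
        ((1 - PowerSeries.C β⁻¹ * PowerSeries.X) ^ (d + 1) *
          PowerSeries.mk (fun n => (β⁻¹) ^ n * (Nat.choose (d + n) d : ℂ))) := by ring
    _ = 1 := by
        rw [my_one_sub_smul_mul_choose, ← map_mul, mul_inv_cancel₀ hne, map_one, mul_one]

lemma my_asc_prod (n : ℕ) : ∀ d : ℕ, (n + 1).ascFactorial d = ∏ i ∈ Finset.range d, (n + 1 + i)
  | 0 => by simp
  | (d + 1) => by
    rw [Nat.ascFactorial_succ, Finset.prod_range_succ, my_asc_prod n d]
    ring

lemma my_choose_mul_factorial (d n : ℕ) :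
    (d + n).choose d * d.factorial = ∏ i ∈ Finset.range d, (n + 1 + i) := by
  rw [mul_comm, Nat.add_comm d n, ← Nat.ascFactorial_eq_factorial_mul_choose, my_asc_prod]

lemma my_choose_tendsto (d : ℕ) :
    Tendsto (fun n : ℕ => ((d + n).choose d : ℝ) / (n : ℝ) ^ d) atTop
      (nhds (1 / d.factorial)) := by
  have hprod : Tendsto (fun n : ℕ => ∏ i ∈ Finset.range d, (((n : ℝ) + 1 + i) / n)) atTop
      (nhds 1) := by
    have h : Tendsto (fun n : ℕ => ∏ i ∈ Finset.range d, (((n : ℝ) + 1 + i) / n)) atTop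
        (nhds (∏ _i ∈ Finset.range d, (1 : ℝ))) := by
      refine tendsto_finset_prod _ fun i _ => ?_
      have h1 : Tendsto (fun n : ℕ => 1 + (1 + (i : ℝ)) / n) atTop (nhds (1 + 0)) :=
        tendsto_const_nhds.add (tendsto_const_div_atTop_nhds_zero_nat (1 + (i : ℝ)))
      rw [add_zero] at h1
      refine h1.congr' ?_
      filter_upwards [eventually_ge_atTop 1] with n hn
      have hn0 : (n : ℝ) ≠ 0 := Nat.cast_ne_zero.mpr (by omega)
      field_simp
      ring
    simpa using h
  have h2 : Tendsto (fun n : ℕ => (1 / (d.factorial : ℝ)) *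
      ∏ i ∈ Finset.range d, (((n : ℝ) + 1 + i) / n)) atTop (nhds (1 / d.factorial * 1)) :=
    hprod.const_mul _
  rw [mul_one] at h2
  refine h2.congr' ?_
  filter_upwards [eventually_ge_atTop 1] with n hn
  have hn0 : (n : ℝ) ≠ 0 := Nat.cast_ne_zero.mpr (by omega)
  have hid : ((d + n).choose d : ℝ) * (d.factorial : ℝ) = ∏ i ∈ Finset.range d, ((n : ℝ) + 1 + i) := by
    have := my_choose_mul_factorial d n
    have h3 := congrArg (fun x : ℕ => (x : ℝ)) this
    push_cast at h3
    convert h3 using 2 <;> push_cast <;> ring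
  have hfd : (d.factorial : ℝ) ≠ 0 := Nat.cast_ne_zero.mpr d.factorial_ne_zero
  rw [Finset.prod_div_distrib, Finset.prod_const, ← hid]
  field_simp
  rw [Finset.card_range]

lemma my_choose_tendsto_sub (d j : ℕ) :
    Tendsto (fun k : ℕ => ((d + (k - j)).choose d : ℝ) / (k : ℝ) ^ d) atTop
      (nhds (1 / d.factorial)) := by
  have h1 : Tendsto (fun k : ℕ => ((d + (k - j)).choose d : ℝ) / ((k - j : ℕ) : ℝ) ^ d) atTop
      (nhds (1 / d.factorial)) := (my_choose_tendsto d).comp (tendsto_sub_atTop_nat j)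
  have h2 : Tendsto (fun k : ℕ => (((k - j : ℕ) : ℝ) / k) ^ d) atTop (nhds 1) := by
    have hb : Tendsto (fun k : ℕ => ((k - j : ℕ) : ℝ) / k) atTop (nhds 1) := by
      have h3 : Tendsto (fun k : ℕ => 1 - (j : ℝ) / k) atTop (nhds (1 - 0)) :=
        tendsto_const_nhds.sub (tendsto_const_div_atTop_nhds_zero_nat _)
      rw [sub_zero] at h3
      refine h3.congr' ?_
      filter_upwards [eventually_ge_atTop (j + 1)] with k hk
      have hk0 : (k : ℝ) ≠ 0 := Nat.cast_ne_zero.mpr (by omega)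
      rw [Nat.cast_sub (by omega), sub_div, div_self hk0]
    have := hb.pow d
    simpa using this
  have h4 := h1.mul h2
  rw [one_div, mul_comm] at h4
  have h5 : (1 : ℝ) * (d.factorial : ℝ)⁻¹ = 1 / d.factorial := by rw [one_mul, one_div]
  rw [h5] at h4
  refine h4.congr' ?_
  filter_upwards [eventually_ge_atTop (j + 1)] with k hk
  have hkj : ((k - j : ℕ) : ℝ) ≠ 0 := Nat.cast_ne_zero.mpr (by omega)
  have hk0 : (k : ℝ) ≠ 0 := Nat.cast_ne_zero.mpr (by omega)
  field_simp
  rw [div_pow, mul_assoc, div_mul_cancel₀ _ (pow_ne_zero _ hk0)]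

lemma my_choose_tendsto_zero (d e : ℕ) (h : d < e) :
    Tendsto (fun k : ℕ => ((d + k).choose d : ℝ) / (k : ℝ) ^ e) atTop (nhds 0) := by
  have h1 : Tendsto (fun k : ℕ => ((k : ℝ) ^ (e - d))⁻¹) atTop (nhds 0) := by
    refine Tendsto.inv_tendsto_atTop ?_
    exact (tendsto_pow_atTop (by omega : e - d ≠ 0)).comp tendsto_natCast_atTop_atTop
  have h2 := (my_choose_tendsto d).mul h1
  rw [mul_zero] at h2
  refine h2.congr' ?_
  filter_upwards [eventually_ge_atTop 1] with k hk
  have hk0 : (k : ℝ) ≠ 0 := Nat.cast_ne_zero.mpr (by omega)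
  have : (k : ℝ) ^ e = (k : ℝ) ^ d * (k : ℝ) ^ (e - d) := by
    rw [← pow_add]
    congr 1
    omega
  rw [this]
  field_simp

/-- Asymptotics of the coefficients of a rational generating function `N(t)/D(t)` with
`D(t) = ∏ᵢ (1 - t^{pᵢ})`: if `deg N < deg D`, `N(1) ≠ 0`, and every complex root
`β ≠ 1` of `D` has multiplicity `< m`, then the coefficients `f_k` of the formal power
series expansion of `N/D` satisfy `f_k / k^{m-1} → N(1) / ((m-1)! · ∏ᵢ pᵢ)`. -/
theorem rational_generating_function_asymptotic
    (m : ℕ) (hm : 1 ≤ m) (p : Fin m → ℕ) (hp : ∀ i, 0 < p i)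
    (N D : Polynomial ℝ)
    (hD : D = ∏ i, (1 - Polynomial.X ^ p i))
    (hdeg : N.degree < D.degree)
    (hN1 : N.eval 1 ≠ 0)
    (hroots : ∀ β : ℂ, β ≠ 1 → (D.map (algebraMap ℝ ℂ)).rootMultiplicity β < m) :
    Tendsto
      (fun k : ℕ =>
        (PowerSeries.coeff (R := ℝ) k
          ((N : PowerSeries ℝ) * (D : PowerSeries ℝ)⁻¹)) / (k : ℝ) ^ (m - 1))
      atTop
      (nhds (N.eval 1 / ((Nat.factorial (m - 1) : ℝ) * ∏ i, (p i : ℝ)))) := by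
  classical
  set mm := m - 1 with hmm
  have hmsucc : mm + 1 = m := by omega
  set φ := algebraMap ℝ ℂ with hφ
  set Dc := D.map φ with hDcdef
  set Nc := N.map φ with hNcdef
  have hDc : Dc = ∏ i, (1 - Polynomial.X ^ p i) := by
    rw [hDcdef, hD, Polynomial.map_prod]
    simp [Polynomial.map_sub, Polynomial.map_pow, Polynomial.map_one, Polynomial.map_X]
  -- constant coefficients
  have hDeval0 : D.eval 0 = 1 := by
    rw [hD, Polynomial.eval_prod]
    refine Finset.prod_eq_one fun i _ => ?_
    simp [zero_pow (hp i).ne']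
  have hDceval0 : Dc.eval 0 = 1 := by
    rw [hDc, Polynomial.eval_prod]
    refine Finset.prod_eq_one fun i _ => ?_
    simp [zero_pow (hp i).ne']
  have hDne : D ≠ 0 := fun h => by simp [h] at hDeval0
  have hDcne : Dc ≠ 0 := fun h => by simp [h] at hDceval0
  -- power series facts
  have hDconst : PowerSeries.constantCoeff (D : PowerSeries ℝ) = 1 := by
    rw [← PowerSeries.coeff_zero_eq_constantCoeff_apply, Polynomial.coeff_coe,
      ← Polynomial.coeff_zero_eq_eval_zero] at *
    exact hDeval0
  have hDcconst : PowerSeries.constantCoeff (Dc : PowerSeries ℂ) = 1 := by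
    rw [← PowerSeries.coeff_zero_eq_constantCoeff_apply, Polynomial.coeff_coe,
      ← Polynomial.coeff_zero_eq_eval_zero] at *
    exact hDceval0
  have hDinv : (D : PowerSeries ℝ) * (D : PowerSeries ℝ)⁻¹ = 1 :=
    PowerSeries.mul_inv_cancel _ (by rw [hDconst]; exact one_ne_zero)
  have hDcinv : (Dc : PowerSeries ℂ) * (Dc : PowerSeries ℂ)⁻¹ = 1 :=
    PowerSeries.mul_inv_cancel _ (by rw [hDcconst]; exact one_ne_zero)
  have hcoe_map : ∀ q : ℝ[X], PowerSeries.map φ (q : PowerSeries ℝ) = ((q.map φ : ℂ[X]) : PowerSeries ℂ) := by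
    intro q
    ext n
    simp [PowerSeries.coeff_map, Polynomial.coeff_coe, Polynomial.coeff_map]
  have hDcPSne : (Dc : PowerSeries ℂ) ≠ 0 := fun h => by
    rw [h] at hDcconst; simp at hDcconst
  have hmapinv : PowerSeries.map φ ((D : PowerSeries ℝ)⁻¹) = (Dc : PowerSeries ℂ)⁻¹ := by
    have h1 : (Dc : PowerSeries ℂ) * PowerSeries.map φ ((D : PowerSeries ℝ)⁻¹) = 1 := by
      rw [← hcoe_map, ← map_mul, hDinv, map_one]
    exact mul_left_cancel₀ hDcPSne (by rw [h1, hDcinv])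
  have hcoeffR : ∀ k : ℕ, ((PowerSeries.coeff k ((N : PowerSeries ℝ) * (D : PowerSeries ℝ)⁻¹) : ℝ) : ℂ)
      = PowerSeries.coeff k ((Nc : PowerSeries ℂ) * (Dc : PowerSeries ℂ)⁻¹) := by
    intro k
    have : PowerSeries.map φ ((N : PowerSeries ℝ) * (D : PowerSeries ℝ)⁻¹)
        = (Nc : PowerSeries ℂ) * (Dc : PowerSeries ℂ)⁻¹ := by
      rw [map_mul, hmapinv, hcoe_map]
    rw [← this, PowerSeries.coeff_map]
    rfl
  -- roots setup
  set s : Finset ℂ := Dc.roots.toFinset with hsdef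
  set μ : ℂ → ℕ := fun β => Dc.rootMultiplicity β with hμdef
  set g : ℂ → ℂ[X] := fun β => (Polynomial.X - Polynomial.C β) ^ μ β with hgdef
  set c := Dc.leadingCoeff with hcdef
  have hc : c ≠ 0 := Polynomial.leadingCoeff_ne_zero.mpr hDcne
  have hsplits : Dc.roots.card = Dc.natDegree :=
    Polynomial.splits_iff_card_roots.mp (IsAlgClosed.splits Dc)
  have hfact : Dc = Polynomial.C c * ∏ β ∈ s, g β := by
    have h1 := Polynomial.C_leadingCoeff_mul_prod_multiset_X_sub_C hsplits
    rw [← h1]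
    congr 1
    rw [Finset.prod_multiset_map_count]
    refine Finset.prod_congr rfl fun β _ => ?_
    rw [Polynomial.count_roots]
  -- root properties
  have hroot_mem : ∀ β ∈ s, Dc.IsRoot β := fun β hβ =>
    (Polynomial.mem_roots hDcne).mp (Multiset.mem_toFinset.mp hβ)
  have hμpos : ∀ β ∈ s, 0 < μ β := fun β hβ =>
    (Polynomial.rootMultiplicity_pos hDcne).mpr (hroot_mem β hβ)
  have hβne0 : ∀ β ∈ s, β ≠ 0 := by
    intro β hβ h0
    have := hroot_mem β hβ
    rw [h0] at this
    rw [Polynomial.IsRoot, hDceval0] at this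
    exact one_ne_zero this
  have hβnorm : ∀ β ∈ s, ‖β‖ = 1 := by
    intro β hβ
    have h0 : Dc.eval β = 0 := hroot_mem β hβ
    rw [hDc, Polynomial.eval_prod] at h0
    obtain ⟨i, _, hi⟩ := Finset.prod_eq_zero_iff.mp h0
    have hβp : β ^ p i = 1 := by
      have : (1 : ℂ) - β ^ p i = 0 := by simpa using hi
      linear_combination -this
    have hn : ‖β‖ ^ p i = 1 := by
      rw [← norm_pow, hβp, norm_one]
    rcases lt_trichotomy ‖β‖ 1 with h | h | h
    · exfalso
      have := pow_lt_one₀ (norm_nonneg β) h (hp i).ne'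
      rw [hn] at this; exact lt_irrefl _ this
    · exact h
    · exfalso
      have := one_lt_pow₀ h (hp i).ne'
      rw [hn] at this; exact lt_irrefl _ this
  -- the factor Qc and multiplicity of 1
  set Qc : ℂ[X] := ∏ i, (∑ j ∈ Finset.range (p i), Polynomial.X ^ j) with hQcdef
  have hgeom : ∀ n : ℕ, (1 - Polynomial.X ^ n : ℂ[X])
      = (1 - Polynomial.X) * ∑ j ∈ Finset.range n, Polynomial.X ^ j := by
    intro n
    have h := geom_sum_mul (Polynomial.X : ℂ[X]) n
    linear_combination h
  have hsplitD : Dc = (1 - Polynomial.X) ^ m * Qc := by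
    rw [hDc, hQcdef]
    rw [Finset.prod_congr rfl fun i _ => hgeom (p i), Finset.prod_mul_distrib]
    congr 1
    rw [Finset.prod_const, Finset.card_univ, Fintype.card_fin]
  have hQc1 : Qc.eval 1 = ∏ i, (p i : ℂ) := by
    rw [hQcdef, Polynomial.eval_prod]
    refine Finset.prod_congr rfl fun i _ => ?_
    simp [Polynomial.eval_finset_sum]
  have hprodp : (∏ i, (p i : ℂ)) ≠ 0 := by
    refine Finset.prod_ne_zero_iff.mpr fun i _ => ?_
    exact_mod_cast (hp i).ne'
  have hQcne1 : Qc.eval 1 ≠ 0 := by rw [hQc1]; exact hprodp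
  have hone_sub_X : ((1 : ℂ[X]) - Polynomial.X) ^ m
      = (-1 : ℂ[X]) ^ m * (Polynomial.X - Polynomial.C 1) ^ m := by
    have h : ((1 : ℂ[X]) - Polynomial.X) = (-1) * (Polynomial.X - Polynomial.C 1) := by
      rw [Polynomial.C_1]; ring
    rw [h, mul_pow]
  have hμ1 : μ 1 = m := by
    have hQcne : Qc ≠ 0 := fun h => by simp [h] at hQcne1
    have hprodne : ((1 : ℂ[X]) - Polynomial.X) ^ m * Qc ≠ 0 := by
      rw [← hsplitD]; exact hDcne
    have h1 : μ 1 = Polynomial.rootMultiplicity 1 (((1 : ℂ[X]) - Polynomial.X) ^ m)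
        + Polynomial.rootMultiplicity 1 Qc := by
      show Polynomial.rootMultiplicity 1 Dc = _
      conv_lhs => rw [hsplitD]
      exact Polynomial.rootMultiplicity_mul hprodne
    have hQz : Polynomial.rootMultiplicity (1 : ℂ) Qc = 0 :=
      Polynomial.rootMultiplicity_eq_zero (by simpa [Polynomial.IsRoot] using hQcne1)
    rw [h1, hQz, add_zero, hone_sub_X]
    have hne2 : ((-1 : ℂ[X]) ^ m) * (Polynomial.X - Polynomial.C 1) ^ m ≠ 0 := by
      rw [← hone_sub_X]
      intro h
      apply hDcne
      rw [hsplitD, h, zero_mul]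
    rw [Polynomial.rootMultiplicity_mul hne2]
    have : (-1 : ℂ[X]) ^ m = Polynomial.C ((-1 : ℂ) ^ m) := by
      rw [map_pow, map_neg, map_one]
    rw [this, Polynomial.rootMultiplicity_C, zero_add,
      Polynomial.rootMultiplicity_X_sub_C_pow]
  have h1mem : (1 : ℂ) ∈ s := by
    rw [hsdef, Multiset.mem_toFinset, Polynomial.mem_roots hDcne]
    rw [hsplitD]
    simp [Polynomial.IsRoot, zero_pow (by omega : m ≠ 0)]
  -- degrees
  have hφinj : Function.Injective φ := (algebraMap ℝ ℂ).injective
  have hdegN : Nc.degree = N.degree := Polynomial.degree_map_eq_of_injective hφinj N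
  have hdegD : Dc.degree = D.degree := Polynomial.degree_map_eq_of_injective hφinj D
  have hdegprod : (∏ β ∈ s, g β).degree = Dc.degree := by
    conv_rhs => rw [hfact]
    rw [Polynomial.degree_C_mul hc]
  have hdeg' : Nc.degree < (∏ β ∈ s, g β).degree := by
    rw [hdegN, hdegprod, hdegD]; exact hdeg
  -- partial fractions
  have hmon : ∀ β ∈ s, (g β).Monic := fun β _ => (Polynomial.monic_X_sub_C β).pow _
  have hcop : ∀ β ∈ s, ∀ γ ∈ s, β ≠ γ → IsCoprime (g β) (g γ) := by
    intro β _ γ _ hne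
    exact (Polynomial.isCoprime_X_sub_C_of_isUnit_sub
      (Ne.isUnit (sub_ne_zero.mpr hne))).pow
  obtain ⟨r, hrdeg, hrsum⟩ := my_partial_fractions s g hmon hcop Nc hdeg'
  -- the inverse power series for each factor
  set S : ℂ → PowerSeries ℂ := fun β => PowerSeries.mk fun n =>
    ((-β) ^ μ β)⁻¹ * (β⁻¹) ^ n * (Nat.choose ((μ β - 1) + n) (μ β - 1) : ℂ) with hSdef
  have hSinv : ∀ β ∈ s, ((g β : ℂ[X]) : PowerSeries ℂ) * S β = 1 := by
    intro β hβ
    obtain ⟨d, hd⟩ : ∃ d, μ β = d + 1 := ⟨μ β - 1, by have := hμpos β hβ; omega⟩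
    have hgβ : g β = (Polynomial.X - Polynomial.C β) ^ (d + 1) := by simp only [hgdef]; rw [hd]
    have hSβ : S β = PowerSeries.mk fun n =>
        ((-β) ^ (d + 1))⁻¹ * (β⁻¹) ^ n * (Nat.choose (d + n) d : ℂ) := by
      simp only [hSdef, hd, Nat.add_sub_cancel]
    rw [hgβ, hSβ]
    exact my_X_sub_C_pow_inv β (hβne0 β hβ) d
  -- power series decomposition
  have hstep1 : (∑ β ∈ s, ((r β : ℂ[X]) : PowerSeries ℂ) * S β) *
      ((∏ β ∈ s, g β : ℂ[X]) : PowerSeries ℂ) = ((Nc : ℂ[X]) : PowerSeries ℂ) := by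
    rw [Finset.sum_mul]
    have hterm : ∀ β ∈ s, ((r β : ℂ[X]) : PowerSeries ℂ) * S β *
        ((∏ γ ∈ s, g γ : ℂ[X]) : PowerSeries ℂ)
        = (((r β * ∏ γ ∈ s.erase β, g γ : ℂ[X]) : ℂ[X]) : PowerSeries ℂ) := by
      intro β hβ
      have hprod : (∏ γ ∈ s, g γ) = g β * ∏ γ ∈ s.erase β, g γ :=
        (Finset.mul_prod_erase s g hβ).symm
      rw [hprod, Polynomial.coe_mul, Polynomial.coe_mul]
      calc ((r β : ℂ[X]) : PowerSeries ℂ) * S β *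
            (((g β : ℂ[X]) : PowerSeries ℂ) * ((∏ γ ∈ s.erase β, g γ : ℂ[X]) : PowerSeries ℂ))
          = ((r β : ℂ[X]) : PowerSeries ℂ) * (((g β : ℂ[X]) : PowerSeries ℂ) * S β) *
            ((∏ γ ∈ s.erase β, g γ : ℂ[X]) : PowerSeries ℂ) := by ring
        _ = _ := by rw [hSinv β hβ, mul_one]
    rw [Finset.sum_congr rfl hterm]
    simp only [← Polynomial.coeToPowerSeries.ringHom_apply]
    rw [← map_sum, ← hrsum]
  have hPg : ((∏ β ∈ s, g β : ℂ[X]) : PowerSeries ℂ)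
      = PowerSeries.C c⁻¹ * (Dc : PowerSeries ℂ) := by
    have h2 : (Dc : PowerSeries ℂ) = PowerSeries.C c * ((∏ β ∈ s, g β : ℂ[X]) : PowerSeries ℂ) := by
      conv_lhs => rw [hfact]
      rw [Polynomial.coe_mul, Polynomial.coe_C]
    rw [h2, ← mul_assoc, ← map_mul, inv_mul_cancel₀ hc, map_one, one_mul]
  have hPS : (Nc : PowerSeries ℂ) * (Dc : PowerSeries ℂ)⁻¹
      = PowerSeries.C c⁻¹ * ∑ β ∈ s, ((r β : ℂ[X]) : PowerSeries ℂ) * S β := by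
    calc (Nc : PowerSeries ℂ) * (Dc : PowerSeries ℂ)⁻¹
        = ((∑ β ∈ s, ((r β : ℂ[X]) : PowerSeries ℂ) * S β) *
            ((∏ β ∈ s, g β : ℂ[X]) : PowerSeries ℂ)) * (Dc : PowerSeries ℂ)⁻¹ := by
          rw [hstep1]
      _ = (∑ β ∈ s, ((r β : ℂ[X]) : PowerSeries ℂ) * S β) * PowerSeries.C c⁻¹ *
            ((Dc : PowerSeries ℂ) * (Dc : PowerSeries ℂ)⁻¹) := by
          rw [hPg]; ring
      _ = _ := by rw [hDcinv, mul_one]; ring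
  have hcoeff : ∀ k : ℕ, PowerSeries.coeff k ((Nc : PowerSeries ℂ) * (Dc : PowerSeries ℂ)⁻¹)
      = c⁻¹ * ∑ β ∈ s, PowerSeries.coeff k (((r β : ℂ[X]) : PowerSeries ℂ) * S β) := by
    intro k
    rw [hPS, PowerSeries.coeff_C_mul, map_sum]
  -- evaluations at 1
  set W : ℂ := ∏ γ ∈ s.erase 1, (1 - γ) ^ μ γ with hWdef
  have hgeval1 : ∀ γ : ℂ, (g γ).eval 1 = (1 - γ) ^ μ γ := by
    intro γ
    simp only [hgdef, Polynomial.eval_pow, Polynomial.eval_sub, Polynomial.eval_X,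
      Polynomial.eval_C, Polynomial.eval_one]
  have hg1eval : (g 1).eval 1 = 0 := by
    rw [hgeval1, hμ1, sub_self, zero_pow (by omega : m ≠ 0)]
  have hNc1 : Nc.eval 1 = ((N.eval 1 : ℝ) : ℂ) := by
    rw [hNcdef, Polynomial.eval_one_map]
    rfl
  have heval : ((N.eval 1 : ℝ) : ℂ) = (r 1).eval 1 * W := by
    have h := congrArg (Polynomial.eval (1 : ℂ)) hrsum
    rw [hNc1, Polynomial.eval_finset_sum] at h
    rw [Finset.sum_eq_single_of_mem 1 h1mem ?_] at h
    · rw [Polynomial.eval_mul, Polynomial.eval_prod] at h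
      rw [h]
      congr 1
      exact Finset.prod_congr rfl fun γ _ => hgeval1 γ
    · intro β hβ hβne
      rw [Polynomial.eval_mul, Polynomial.eval_prod]
      have h1e : (1 : ℂ) ∈ s.erase β := Finset.mem_erase.mpr ⟨hβne.symm, h1mem⟩
      rw [Finset.prod_eq_zero h1e hg1eval, mul_zero]
  have hsq : (-1 : ℂ[X]) ^ m * (-1 : ℂ[X]) ^ m = 1 := by
    rw [← mul_pow]; norm_num
  have hg1 : g 1 = (-1 : ℂ[X]) ^ m * (1 - Polynomial.X) ^ m := by
    simp only [hgdef, hμ1]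
    rw [hone_sub_X, ← mul_assoc, hsq, one_mul]
  have hW : (∏ i, (p i : ℂ)) = (-1 : ℂ) ^ m * c * W := by
    have hDc2 : Dc = Polynomial.C c * (g 1 * ∏ γ ∈ s.erase 1, g γ) := by
      rw [hfact]
      congr 1
      exact (Finset.mul_prod_erase s g h1mem).symm
    have hne : ((1 : ℂ[X]) - Polynomial.X) ^ m ≠ 0 := by
      intro h
      apply hDcne
      rw [hsplitD, h, zero_mul]
    have hcancel : Qc = (-1 : ℂ[X]) ^ m * Polynomial.C c * ∏ γ ∈ s.erase 1, g γ := by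
      apply mul_left_cancel₀ hne
      rw [← hsplitD, hDc2, hg1]
      ring
    have h := congrArg (Polynomial.eval (1 : ℂ)) hcancel
    rw [hQc1, Polynomial.eval_mul, Polynomial.eval_mul, Polynomial.eval_pow,
      Polynomial.eval_neg, Polynomial.eval_one, Polynomial.eval_C, Polynomial.eval_prod] at h
    rw [h]
    congr 1
    exact Finset.prod_congr rfl fun γ _ => hgeval1 γ
  have hWne : W ≠ 0 := by
    intro h
    apply hprodp
    rw [hW, h, mul_zero]
  -- the coefficient sequences
  set A : ℂ → ℕ → ℂ := fun β k =>
    PowerSeries.coeff k (((r β : ℂ[X]) : PowerSeries ℂ) * S β) with hAdef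
  have hAcoeff : ∀ β k, A β k = ∑ j ∈ Finset.range (k + 1),
      (r β).coeff j * (((-β) ^ μ β)⁻¹ * (β⁻¹) ^ (k - j) *
        (Nat.choose ((μ β - 1) + (k - j)) (μ β - 1) : ℂ)) := by
    intro β k
    simp only [hAdef]
    rw [PowerSeries.coeff_mul, Finset.Nat.sum_antidiagonal_eq_sum_range_succ_mk]
    refine Finset.sum_congr rfl fun j hj => ?_
    rw [Polynomial.coeff_coe]
    congr 1
    simp only [hSdef, PowerSeries.coeff_mk]
  have hAtrunc : ∀ β k, (r β).natDegree ≤ k →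
      A β k = ∑ j ∈ Finset.range ((r β).natDegree + 1),
      (r β).coeff j * (((-β) ^ μ β)⁻¹ * (β⁻¹) ^ (k - j) *
        (Nat.choose ((μ β - 1) + (k - j)) (μ β - 1) : ℂ)) := by
    intro β k hk
    rw [hAcoeff β k]
    symm
    apply Finset.sum_subset
    · intro j hj
      rw [Finset.mem_range] at *
      omega
    · intro j hj hnj
      rw [Finset.mem_range] at hj hnj
      rw [Polynomial.coeff_eq_zero_of_natDegree_lt (by omega), zero_mul]
  -- the limit values
  set V : ℂ := ((-1 : ℂ) ^ m)⁻¹ * (r 1).eval 1 * (1 / (mm.factorial : ℂ)) with hVdef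
  set LF : ℂ → ℂ := fun β => if β = 1 then V else 0 with hLFdef
  have hten : ∀ β ∈ s, Tendsto (fun k : ℕ => A β k / (k : ℂ) ^ mm) atTop (nhds (LF β)) := by
    intro β hβ
    by_cases hβ1 : β = 1
    · subst hβ1
      have hLF1 : LF 1 = V := by simp [hLFdef]
      rw [hLF1]
      set e := (r 1).natDegree + 1 with hedef
      have hterm : ∀ j : ℕ, Tendsto (fun k : ℕ =>
          ((Nat.choose (mm + (k - j)) mm : ℕ) : ℂ) / (k : ℂ) ^ mm) atTop
          (nhds (1 / (mm.factorial : ℂ))) := by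
        intro j
        have hr := my_choose_tendsto_sub mm j
        have h2 := (Complex.continuous_ofReal.tendsto _).comp hr
        have hfun : (fun k : ℕ => ((((mm + (k - j)).choose mm : ℝ) / (k : ℝ) ^ mm : ℝ) : ℂ))
            = fun k : ℕ => ((Nat.choose (mm + (k - j)) mm : ℕ) : ℂ) / (k : ℂ) ^ mm := by
          funext k
          push_cast
          ring
        have hlim : ((((1 : ℝ) / mm.factorial : ℝ)) : ℂ) = 1 / (mm.factorial : ℂ) := by
          push_cast
          ring
        rw [← hlim]
        refine h2.congr fun k => ?_
        simp only [Function.comp_apply]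
        push_cast
        ring
      have hsumten : Tendsto (fun k : ℕ => ∑ j ∈ Finset.range e,
          (r 1).coeff j * (((-1 : ℂ) ^ m)⁻¹ *
            (((Nat.choose (mm + (k - j)) mm : ℕ) : ℂ) / (k : ℂ) ^ mm))) atTop
          (nhds (∑ j ∈ Finset.range e,
            (r 1).coeff j * (((-1 : ℂ) ^ m)⁻¹ * (1 / (mm.factorial : ℂ))))) := by
        refine tendsto_finset_sum _ fun j _ => ?_
        exact ((hterm j).const_mul _).const_mul _
      have hval2 : (∑ j ∈ Finset.range e,
          (r 1).coeff j * (((-1 : ℂ) ^ m)⁻¹ * (1 / (mm.factorial : ℂ)))) = V := by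
        rw [← Finset.sum_mul, hVdef]
        have hev : (r 1).eval 1 = ∑ j ∈ Finset.range e, (r 1).coeff j := by
          rw [hedef, Polynomial.eval_eq_sum_range]
          simp
        rw [hev]
        ring
      rw [hval2] at hsumten
      refine hsumten.congr' ?_
      filter_upwards [eventually_ge_atTop (r 1).natDegree] with k hk
      rw [hAtrunc 1 k hk, Finset.sum_div]
      refine Finset.sum_congr rfl fun j hj => ?_
      have hμm : μ 1 = m := hμ1
      rw [hμm, ← hmm, inv_one, one_pow, mul_one]
      ring
    · have hLFβ : LF β = 0 := by simp [hLFdef, hβ1]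
      rw [hLFβ]
      set d := μ β - 1 with hddef
      have hd : d < mm := by
        have h1 : μ β < m := hroots β hβ1
        have h2 : 0 < μ β := hμpos β hβ
        omega
      set e := (r β).natDegree + 1 with hedef
      set M : ℝ := (∑ j ∈ Finset.range e, ‖(r β).coeff j‖) * ‖((-β) ^ μ β)⁻¹‖ with hMdef
      have hβinv : ‖(β⁻¹ : ℂ)‖ = 1 := by
        rw [norm_inv, hβnorm β hβ]
        norm_num
      have hnormnat : ∀ k : ℕ, ‖((k : ℕ) : ℂ)‖ = (k : ℝ) := by
        intro k
        simp
      have hbound : ∀ᶠ k in atTop, ‖A β k / (k : ℂ) ^ mm‖ ≤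
          (M * ((d + k).choose d : ℝ)) / (k : ℝ) ^ mm := by
        filter_upwards [eventually_ge_atTop (r β).natDegree] with k hk
        rw [norm_div, norm_pow, hnormnat]
        have hAle : ‖A β k‖ ≤ M * ((d + k).choose d : ℝ) := by
          rw [hAtrunc β k hk]
          refine le_trans (norm_sum_le _ _) ?_
          have hle : ∀ j ∈ Finset.range e, ‖(r β).coeff j * (((-β) ^ μ β)⁻¹ * (β⁻¹) ^ (k - j) *
              (Nat.choose (d + (k - j)) d : ℂ))‖ ≤
              ‖(r β).coeff j‖ * (‖((-β) ^ μ β)⁻¹‖ * ((d + k).choose d : ℝ)) := by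
            intro j hj
            rw [norm_mul, norm_mul, norm_mul, norm_pow, hβinv, one_pow, mul_one]
            refine mul_le_mul_of_nonneg_left ?_ (norm_nonneg _)
            refine mul_le_mul_of_nonneg_left ?_ (norm_nonneg _)
            rw [Complex.norm_natCast]
            exact_mod_cast Nat.choose_le_choose d (by omega : d + (k - j) ≤ d + k)
          refine le_trans (Finset.sum_le_sum hle) ?_
          rw [← Finset.sum_mul, hMdef]
          exact le_of_eq (by ring)
        gcongr
      have hzero := my_choose_tendsto_zero d mm hd
      have hlim0 : Tendsto (fun k : ℕ => (M * ((d + k).choose d : ℝ)) / (k : ℝ) ^ mm)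
          atTop (nhds 0) := by
        have h3 := hzero.const_mul M
        rw [mul_zero] at h3
        refine h3.congr fun k => ?_
        ring
      exact squeeze_zero_norm' hbound hlim0
  -- sum over all roots
  have htotal : Tendsto (fun k : ℕ => ∑ β ∈ s, A β k / (k : ℂ) ^ mm) atTop (nhds V) := by
    have h := tendsto_finset_sum s hten
    have hsum : ∑ β ∈ s, LF β = V := by
      simp only [hLFdef]
      rw [Finset.sum_ite_eq' s 1 fun _ => V]
      rw [if_pos h1mem]
    rwa [hsum] at h
  have hG : Tendsto (fun k : ℕ => PowerSeries.coeff k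
      ((Nc : PowerSeries ℂ) * (Dc : PowerSeries ℂ)⁻¹) / (k : ℂ) ^ mm) atTop
      (nhds (c⁻¹ * V)) := by
    have h := htotal.const_mul c⁻¹
    refine h.congr fun k => ?_
    rw [hcoeff k, mul_div_assoc, Finset.sum_div, Finset.mul_sum]
  -- identify the limit value
  have hm1 : ((-1 : ℂ) ^ m) ≠ 0 := pow_ne_zero _ (by norm_num)
  have hfm : (mm.factorial : ℂ) ≠ 0 := Nat.cast_ne_zero.mpr mm.factorial_ne_zero
  have hval : c⁻¹ * V = ((N.eval 1 : ℝ) : ℂ) / ((mm.factorial : ℂ) * ∏ i, (p i : ℂ)) := by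
    rw [hVdef, heval, hW]
    field_simp
  rw [hval] at hG
  -- back to the reals
  have hcast : ((N.eval 1 / ((mm.factorial : ℝ) * ∏ i, (p i : ℝ)) : ℝ) : ℂ)
      = ((N.eval 1 : ℝ) : ℂ) / ((mm.factorial : ℂ) * ∏ i, (p i : ℂ)) := by
    push_cast
    ring
  have hre := (Complex.continuous_re.tendsto _).comp hG
  have hlimre : ((((N.eval 1 : ℝ) : ℂ)) / ((mm.factorial : ℂ) * ∏ i, (p i : ℂ))).re
      = N.eval 1 / ((mm.factorial : ℝ) * ∏ i, (p i : ℝ)) := by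
    rw [← hcast, Complex.ofReal_re]
  rw [hlimre] at hre
  refine hre.congr fun k => ?_
  simp only [Function.comp_apply]
  rw [← hcoeffR k]
  have hkc : ((k : ℂ) ^ mm) = (((k : ℝ) ^ mm : ℝ) : ℂ) := by push_cast; ring
  rw [hkc, ← Complex.ofReal_div, Complex.ofReal_re]
end
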